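/- arXiv:1503.06321 — 3 statements merged into one kernel-verified Lean document; each statement's English description precedes it below -/
import Mathlib

section
/- Let G be a finite simple graph, and let k, x be nonnegative integers. If v is a vertex of G of degree at least k + √x + 1, then every set C of at most k vertices such that G − C has at most x ordered connected pairs must contain v. -/
/-- The number of ordered connected pairs of a graph. -/
noncomputable def connPairs {V : Type*} (G : SimpleGraph V) : ℕ :=
  {p : V × V | p.1 ≠ p.2 ∧ G.Reachable p.1 p.2}.ncard

lemma ncard_offDiag' {α : Type*} (s : Set α) (hs : s.Finite) :
    s.offDiag.ncard = s.ncard * s.ncard - s.ncard := by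
  classical
  have h1 : s.offDiag = ((hs.toFinset.offDiag : Finset (α × α)) : Set (α × α)) := by
    rw [Finset.coe_offDiag, hs.coe_toFinset]
  rw [h1, Set.ncard_coe_finset, Finset.offDiag_card, ← Set.ncard_coe_finset,
    hs.coe_toFinset]

/-- If a vertex `v` has degree at least `k + √x + 1`, then every set `C` of at
most `k` vertices such that `G − C` has at most `x` ordered connected pairs
must contain `v`. -/
theorem stmt2 {V : Type*} [Fintype V] (G : SimpleGraph V) (k x : ℕ) (v : V)
    (hdeg : (k : ℝ) + Real.sqrt x + 1 ≤ ((G.neighborSet v).ncard : ℝ)) :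
    ∀ C : Set V, C.ncard ≤ k → connPairs (G.induce Cᶜ) ≤ x → v ∈ C := by
  intro C hCk hconn
  by_contra hv
  have hvC : v ∈ Cᶜ := hv
  set W := ↥(Cᶜ : Set V)
  -- T : the set consisting of v and its neighbors inside Cᶜ
  set T : Set W := {u : W | G.Adj v ↑u} ∪ {⟨v, hvC⟩} with hT
  have hTfin : T.Finite := Set.toFinite T
  -- reachability: any distinct pair in T is reachable in the induced graph
  have hsub : T.offDiag ⊆ {p : W × W | p.1 ≠ p.2 ∧ (G.induce Cᶜ).Reachable p.1 p.2} := by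
    rintro ⟨a, b⟩ ⟨ha, hb, hab⟩
    refine ⟨hab, ?_⟩
    have key : ∀ u : W, u ∈ T → (G.induce Cᶜ).Reachable ⟨v, hvC⟩ u := by
      rintro u (hu | hu)
      · exact SimpleGraph.Adj.reachable (by exact hu)
      · simp only [Set.mem_singleton_iff] at hu
        rw [hu]
    exact (key a ha).symm.trans (key b hb)
  -- cardinality of image of T in V
  have himg : Subtype.val '' T = (G.neighborSet v ∩ Cᶜ) ∪ {v} := by
    ext w
    simp only [hT, Set.image_union, Set.mem_union, Set.mem_image,
      Set.mem_setOf_eq, Set.image_singleton, Set.mem_singleton_iff,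
      Set.mem_inter_iff, SimpleGraph.mem_neighborSet]
    constructor
    · rintro (⟨⟨u, hu⟩, hadj, rfl⟩ | rfl)
      · exact Or.inl ⟨hadj, hu⟩
      · exact Or.inr rfl
    · rintro (⟨hadj, hw⟩ | rfl)
      · exact Or.inl ⟨⟨w, hw⟩, hadj, rfl⟩
      · exact Or.inr rfl
  have hTcard : T.ncard = ((G.neighborSet v ∩ Cᶜ) ∪ {v}).ncard := by
    rw [← himg, Set.ncard_image_of_injective _ Subtype.val_injective]
  have hvnot : v ∉ G.neighborSet v ∩ Cᶜ := fun h => G.irrefl h.1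
  have hcard2 : ((G.neighborSet v ∩ Cᶜ) ∪ {v}).ncard
      = (G.neighborSet v ∩ Cᶜ).ncard + 1 := by
    rw [Set.union_singleton, Set.ncard_insert_of_notMem hvnot (Set.toFinite _)]
  -- neighborSet v ⊆ (neighborSet v ∩ Cᶜ) ∪ C
  have hsplit : G.neighborSet v ⊆ (G.neighborSet v ∩ Cᶜ) ∪ C := by
    intro u hu
    by_cases h : u ∈ C
    · exact Or.inr h
    · exact Or.inl ⟨hu, h⟩
  have hle : (G.neighborSet v).ncard ≤ (G.neighborSet v ∩ Cᶜ).ncard + C.ncard :=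
    le_trans (Set.ncard_le_ncard hsplit (Set.toFinite _)) (Set.ncard_union_le _ _)
  -- put everything in ℝ
  set m := T.ncard with hm
  have hmlb : (Real.sqrt x) + 2 ≤ (m : ℝ) := by
    have h1 : ((G.neighborSet v).ncard : ℝ) ≤ ((G.neighborSet v ∩ Cᶜ).ncard : ℝ) + k := by
      have := hle
      have hck : C.ncard ≤ k := hCk
      push_cast
      have : ((G.neighborSet v).ncard : ℝ) ≤ ((G.neighborSet v ∩ Cᶜ).ncard : ℝ) + C.ncard := by
        exact_mod_cast hle
      nlinarith [ (Nat.cast_le (α := ℝ)).2 hck ]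
    have hm' : (m : ℝ) = ((G.neighborSet v ∩ Cᶜ).ncard : ℝ) + 1 := by
      rw [hTcard, hcard2]; push_cast; ring
    linarith
  -- offDiag card lower bound
  have hoff : T.offDiag.ncard ≤ connPairs (G.induce Cᶜ) := by
    exact Set.ncard_le_ncard hsub (Set.toFinite _)
  have hoffval : T.offDiag.ncard = m * m - m := ncard_offDiag' T hTfin
  have hm1 : 1 ≤ m := by
    have : Real.sqrt x ≥ 0 := Real.sqrt_nonneg _
    have : (1 : ℝ) ≤ (m : ℝ) := by linarith
    exact_mod_cast this
  have hxlt : (x : ℝ) < (m : ℝ) * (m : ℝ) - (m : ℝ) := by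
    have hs := Real.sq_sqrt (by positivity : (0:ℝ) ≤ (x:ℝ))
    nlinarith [Real.sqrt_nonneg (x : ℝ), hmlb]
  have hnat : x < m * m - m := by
    have h1 : ((m * m - m : ℕ) : ℝ) = (m : ℝ) * (m : ℝ) - (m : ℝ) := by
      have : m ≤ m * m := Nat.le_mul_of_pos_left m hm1
      push_cast [Nat.cast_sub this]; ring
    have : (x : ℝ) < ((m * m - m : ℕ) : ℝ) := by rw [h1]; exact hxlt
    exact_mod_cast this
  have : x < connPairs (G.induce Cᶜ) := lt_of_lt_of_le hnat (hoffval ▸ hoff)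
  omega
end

section
/- Let G be a finite simple graph with no isolated vertices in which every vertex has degree at most k + √x. If there exists a set C of at most k vertices such that G − C has at most x ordered connected pairs, then the number of vertices of G is at most k(k + √x) + x + k. -/
/-- If `G` has no isolated vertices, every vertex has degree at most `k + √x`,
and some set `C` of at most `k` vertices leaves at most `x` ordered connected
pairs in `G − C`, then `G` has at most `k(k + √x) + x + k` vertices. -/
theorem stmt3 {V : Type*} [Fintype V] (G : SimpleGraph V) (k x : ℕ)
    (hiso : ∀ v : V, ∃ u : V, G.Adj v u)
    (hdeg : ∀ v : V, ((G.neighborSet v).ncard : ℝ) ≤ (k : ℝ) + Real.sqrt x)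
    (hsol : ∃ C : Set V, C.ncard ≤ k ∧ connPairs (G.induce Cᶜ) ≤ x) :
    (Fintype.card V : ℝ) ≤ k * ((k : ℝ) + Real.sqrt x) + x + k := by
  classical
  obtain ⟨C, hCk, hx⟩ := hsol
  set P : Set (↥Cᶜ × ↥Cᶜ) :=
    {p : ↥Cᶜ × ↥Cᶜ | p.1 ≠ p.2 ∧ (G.induce Cᶜ).Reachable p.1 p.2} with hP
  have : Finite V := Finite.of_fintype V
  set Cf : Finset V := C.toFinset with hCf
  set A : Finset V := Finset.univ.filter (fun v => v ∉ C ∧ ∀ u, G.Adj v u → u ∈ C) with hA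
  set B : Finset V := Finset.univ.filter (fun v => v ∉ C ∧ ∃ u, u ∉ C ∧ G.Adj v u) with hB
  -- cover
  have hcover : (Finset.univ : Finset V) ⊆ Cf ∪ A ∪ B := by
    intro v _
    simp only [Finset.mem_union, hCf, hA, hB, Finset.mem_filter, Finset.mem_univ, true_and,
      Set.mem_toFinset]
    by_cases hvC : v ∈ C
    · exact Or.inl (Or.inl hvC)
    by_cases hall : ∀ u, G.Adj v u → u ∈ C
    · exact Or.inl (Or.inr ⟨hvC, hall⟩)
    · push_neg at hall
      obtain ⟨u, hu1, hu2⟩ := hall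
      exact Or.inr ⟨hvC, u, hu2, hu1⟩
  have hcard : Fintype.card V ≤ Cf.card + A.card + B.card := by
    calc Fintype.card V = (Finset.univ : Finset V).card := rfl
      _ ≤ (Cf ∪ A ∪ B).card := Finset.card_le_card hcover
      _ ≤ (Cf ∪ A).card + B.card := Finset.card_union_le _ _
      _ ≤ Cf.card + A.card + B.card := by
          exact Nat.add_le_add_right (Finset.card_union_le _ _) _
  -- B bound
  have hBsub : (B : Set V) ⊆ (fun p : ↥Cᶜ × ↥Cᶜ => (p.1 : V)) '' P := by
    rintro v hv
    simp only [hB, Finset.coe_filter, Set.mem_setOf_eq, Finset.mem_univ, true_and] at hv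
    obtain ⟨hvC, u, huC, hadj⟩ := hv
    refine ⟨(⟨v, hvC⟩, ⟨u, huC⟩), ⟨?_, ?_⟩, rfl⟩
    · simp only [ne_eq, Prod.mk.injEq]
      intro h
      exact G.ne_of_adj hadj (congrArg Subtype.val h)
    · exact SimpleGraph.Adj.reachable (by simpa using hadj)
  have hBx : B.card ≤ x := by
    have h1 : (B : Set V).ncard ≤ ((fun p : ↥Cᶜ × ↥Cᶜ => (p.1 : V)) '' P).ncard :=
      Set.ncard_le_ncard hBsub (Set.toFinite _)
    have h2 : ((fun p : ↥Cᶜ × ↥Cᶜ => (p.1 : V)) '' P).ncard ≤ P.ncard :=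
      Set.ncard_image_le (Set.toFinite _)
    have h3 : (B : Set V).ncard = B.card := Set.ncard_coe_finset B
    have hPx : P.ncard ≤ x := hx
    omega
  -- A bound
  have hf : ∀ a ∈ A, (hiso a).choose ∈ Cf := by
    intro a ha
    simp only [hA, Finset.mem_filter, Finset.mem_univ, true_and] at ha
    simp only [hCf, Set.mem_toFinset]
    exact ha.2 _ (hiso a).choose_spec
  have hAcard : A.card = ∑ c ∈ Cf, (A.filter (fun a => (hiso a).choose = c)).card :=
    Finset.card_eq_sum_card_fiberwise hf
  have hfiber : ∀ c ∈ Cf, ((A.filter (fun a => (hiso a).choose = c)).card : ℝ)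
      ≤ (k : ℝ) + Real.sqrt x := by
    intro c _
    refine le_trans ?_ (hdeg c)
    have hsub : (A.filter (fun a => (hiso a).choose = c)) ⊆ (G.neighborSet c).toFinset := by
      intro a ha
      simp only [Finset.mem_filter] at ha
      have := (hiso a).choose_spec
      rw [ha.2] at this
      simp [SimpleGraph.mem_neighborSet, this.symm]
    have := Finset.card_le_card hsub
    rw [Set.ncard_eq_toFinset_card' (G.neighborSet c)]
    exact_mod_cast this
  have hAreal : (A.card : ℝ) ≤ (k : ℝ) * ((k : ℝ) + Real.sqrt x) := by
    have h1 : (A.card : ℝ) ≤ ∑ c ∈ Cf, ((k : ℝ) + Real.sqrt x) := by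
      rw [hAcard]
      push_cast
      exact Finset.sum_le_sum hfiber
    rw [Finset.sum_const, nsmul_eq_mul] at h1
    refine h1.trans (mul_le_mul_of_nonneg_right ?_ ?_)
    · have : Cf.card = C.ncard := (Set.ncard_eq_toFinset_card' C).symm
      exact_mod_cast this ▸ (Nat.cast_le.mpr hCk)
    · positivity
  have hCfk : Cf.card ≤ k := by
    have : Cf.card = C.ncard := (Set.ncard_eq_toFinset_card' C).symm
    omega
  have : (Fintype.card V : ℝ) ≤ (Cf.card : ℝ) + A.card + B.card := by exact_mod_cast hcard
  refine this.trans ?_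
  have hB' : (B.card : ℝ) ≤ x := by exact_mod_cast hBx
  have hC' : (Cf.card : ℝ) ≤ k := by exact_mod_cast hCfk
  linarith
end

section
/- Let H be a graph and C a set of vertices achieving the maximum number of removed ordered connected pairs among all sets of size |C|. If v ∈ C is a vertex whose neighborhood in H is a clique and C∖{v} does not contain all neighbors of v, then there exists a neighbor u of v with u ∉ C such that (C∖{v})∪{u} removes at least as many ordered connected pairs as C. (Simplicial vertices can be exchanged out of optimal critical node cuts.) -/
/-- The number of ordered connected pairs removed by deleting the vertex set `S`. -/
noncomputable def removedPairs {V : Type*} (G : SimpleGraph V) (S : Set V) : ℕ :=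
  connPairs G - connPairs (G.induce Sᶜ)

open SimpleGraph

/-- Reroute a walk whose support lies in `t` around a simplicial vertex `v`. -/
private lemma reroute {V : Type*} {H : SimpleGraph V} {v : V}
    (hsimp : ∀ a ∈ H.neighborSet v, ∀ b ∈ H.neighborSet v, a ≠ b → H.Adj a b)
    (t : Set V) :
    ∀ n {a b : V} (w : H.Walk a b), w.length = n → a ≠ v → b ≠ v →
      (∀ x ∈ w.support, x ∈ t) →
      ∃ w' : H.Walk a b, ∀ x ∈ w'.support, x ∈ t ∧ x ≠ v := by
  intro n
  induction n using Nat.strong_induction_on with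
  | _ n ih =>
    intro a b w hlen ha hb hsupp
    cases w with
    | nil =>
      exact ⟨SimpleGraph.Walk.nil, by
        intro x hx
        simp only [SimpleGraph.Walk.support_nil, List.mem_singleton] at hx
        subst hx
        exact ⟨hsupp _ (by simp), ha⟩⟩
    | @cons _ c _ h p =>
      subst hlen
      by_cases hc : c = v
      · subst hc   -- `v` is replaced by `c` everywhere
        cases p with
        | nil => exact absurd rfl hb
        | @cons _ d _ h2 q =>
          have haN : a ∈ H.neighborSet c := h.symm
          have hdN : d ∈ H.neighborSet c := h2
          by_cases had : a = d
          · subst had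
            refine ih q.length (by simp only [SimpleGraph.Walk.length_cons]; omega) q rfl ha hb ?_
            intro x hx
            exact hsupp x (by simp [SimpleGraph.Walk.support_cons]; tauto)
          · have hadj : H.Adj a d := hsimp a haN d hdN had
            refine ih (q.length + 1) (by simp [SimpleGraph.Walk.length_cons])
              (SimpleGraph.Walk.cons hadj q) (by simp) ha hb ?_
            intro x hx
            simp only [SimpleGraph.Walk.support_cons, List.mem_cons] at hx
            rcases hx with rfl | hx
            · exact hsupp x (by simp [SimpleGraph.Walk.support_cons])
            · exact hsupp x (by simp [SimpleGraph.Walk.support_cons]; tauto)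
      · obtain ⟨p', hp'⟩ := ih p.length (by simp [SimpleGraph.Walk.length_cons])
          p rfl hc hb (fun x hx => hsupp x (by simp [SimpleGraph.Walk.support_cons]; tauto))
        refine ⟨SimpleGraph.Walk.cons h p', ?_⟩
        intro x hx
        simp only [SimpleGraph.Walk.support_cons, List.mem_cons] at hx
        rcases hx with rfl | hx
        · exact ⟨hsupp x (by simp [SimpleGraph.Walk.support_cons]), ha⟩
        · exact hp' x hx

/-- A walk in `H` with support in `t` gives reachability in the induced subgraph. -/
private lemma reach_induce_of_walk {V : Type*} {H : SimpleGraph V} {t : Set V} :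
    ∀ {a b : V} (w : H.Walk a b) (hs : ∀ x ∈ w.support, x ∈ t),
      (H.induce t).Reachable ⟨a, hs a w.start_mem_support⟩ ⟨b, hs b w.end_mem_support⟩ := by
  intro a b w
  induction w with
  | nil => intro hs; exact SimpleGraph.Reachable.refl _
  | @cons a c b h p ih =>
    intro hs
    have hc : c ∈ t := hs c (by simp [SimpleGraph.Walk.support_cons])
    have h1 : (H.induce t).Adj ⟨a, hs a (by simp [SimpleGraph.Walk.support_cons])⟩ ⟨c, hc⟩ := h
    exact h1.reachable.trans (ih (fun x hx => hs x (by simp [SimpleGraph.Walk.support_cons]; tauto)))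

/-- A walk in the induced subgraph gives a walk in `H` with support in `t`. -/
private lemma walk_of_induce {V : Type*} {H : SimpleGraph V} {t : Set V} :
    ∀ {x y : t} (_ : (H.induce t).Walk x y),
      ∃ w' : H.Walk (x : V) (y : V), ∀ z ∈ w'.support, z ∈ t := by
  intro x y w
  induction w with
  | nil => exact ⟨SimpleGraph.Walk.nil, by simpa using x.2⟩
  | @cons a c b h p ih =>
    obtain ⟨p', hp'⟩ := ih
    refine ⟨SimpleGraph.Walk.cons h p', ?_⟩
    intro z hz
    change z ∈ (a : V) :: p'.support at hz
    rw [List.mem_cons] at hz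
    rcases hz with rfl | hz
    · exact a.2
    · exact hp' z hz

/-- Simplicial vertices can be exchanged out of optimal critical node cuts:
if `C` maximizes the number of removed ordered connected pairs among all sets of
its size, `v ∈ C` has a clique neighborhood, and `C ∖ {v}` does not contain all
neighbors of `v`, then some neighbor `u ∉ C` of `v` is such that
`(C ∖ {v}) ∪ {u}` removes at least as many ordered connected pairs as `C`. -/
theorem stmt4 {V : Type*} [Fintype V] (H : SimpleGraph V) (C : Set V) (v : V)
    (hopt : ∀ C' : Set V, C'.ncard = C.ncard → removedPairs H C' ≤ removedPairs H C)
    (hv : v ∈ C)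
    (hsimp : ∀ a ∈ H.neighborSet v, ∀ b ∈ H.neighborSet v, a ≠ b → H.Adj a b)
    (hnotall : ¬ H.neighborSet v ⊆ C \ {v}) :
    ∃ u ∈ H.neighborSet v, u ∉ C ∧
      removedPairs H C ≤ removedPairs H ((C \ {v}) ∪ {u}) := by
  obtain ⟨u, huN, huC'⟩ := Set.not_subset.mp hnotall
  have huv : u ≠ v := fun h => H.irrefl (h ▸ huN)
  have huC : u ∉ C := fun h => huC' ⟨h, huv⟩
  refine ⟨u, huN, huC, ?_⟩
  set C' : Set V := (C \ {v}) ∪ {u} with hC'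
  have huC'mem : u ∈ C' := Or.inr rfl
  -- key inclusions
  have hsub : C'ᶜ \ {v} ⊆ Cᶜ := by
    rintro x ⟨hx, hxv⟩
    intro hxC
    exact hx (Or.inl ⟨hxC, hxv⟩)
  have huCc : u ∈ Cᶜ := huC
  have gmem : ∀ x : (C'ᶜ : Set V), (x : V) ≠ v → (x : V) ∈ Cᶜ := fun x hx => hsub ⟨x.2, hx⟩
  classical
  let g : (C'ᶜ : Set V) → (Cᶜ : Set V) := fun x =>
    if h : (x : V) = v then ⟨u, huCc⟩ else ⟨x, gmem x h⟩
  have ginj : Function.Injective g := by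
    intro x y hxy
    apply Subtype.ext
    by_cases hx : (x : V) = v <;> by_cases hy : (y : V) = v
    · rw [hx, hy]
    · exfalso
      have h1 : u = (y : V) := by simpa [g, hx, hy] using congrArg Subtype.val hxy
      exact y.2 (h1 ▸ huC'mem)
    · exfalso
      have h1 : (x : V) = u := by simpa [g, hx, hy] using congrArg Subtype.val hxy
      exact x.2 (h1.symm ▸ huC'mem)
    · simpa [g, hx, hy] using congrArg Subtype.val hxy
  -- walks from v can be restarted at u
  have key0 : ∀ (b : V), b ≠ v → ∀ (w : H.Walk v b), (∀ z ∈ w.support, z ∈ C'ᶜ) →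
      ∃ w'' : H.Walk u b, ∀ z ∈ w''.support, z ∈ Cᶜ := by
    intro b hbv w hw
    cases w with
    | nil => exact absurd rfl hbv
    | @cons _ c _ h p =>
      have hcv : c ≠ v := fun hh => H.irrefl (hh ▸ h)
      have hcC' : c ∈ C'ᶜ := hw c (by simp [SimpleGraph.Walk.support_cons])
      have hcu : c ≠ u := fun hh => hcC' (hh ▸ huC'mem)
      obtain ⟨p', hp'⟩ := reroute hsimp C'ᶜ p.length p rfl hcv hbv
        (fun z hz => hw z (by simp [SimpleGraph.Walk.support_cons]; tauto))
      have huc : H.Adj u c := hsimp u huN c h (Ne.symm hcu).symm.symm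
      refine ⟨SimpleGraph.Walk.cons huc p', ?_⟩
      intro z hz
      simp only [SimpleGraph.Walk.support_cons, List.mem_cons] at hz
      rcases hz with rfl | hz
      · exact huCc
      · exact hsub ⟨(hp' z hz).1, (hp' z hz).2⟩
  have key1 : ∀ (b : (C'ᶜ : Set V)) (hbv : (b : V) ≠ v) (x : (C'ᶜ : Set V)),
      (x : V) = v → (H.induce C'ᶜ).Reachable x b →
      (H.induce Cᶜ).Reachable ⟨u, huCc⟩ ⟨b, gmem b hbv⟩ := by
    intro b hbv x hxv hreach
    obtain ⟨w⟩ := hreach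
    obtain ⟨w', hw'⟩ := walk_of_induce w
    obtain ⟨w'', hw''⟩ := key0 b hbv (w'.copy hxv rfl)
      (by rw [SimpleGraph.Walk.support_copy]; exact hw')
    exact reach_induce_of_walk w'' hw''
  have key2 : ∀ (a b : (C'ᶜ : Set V)), a ≠ b → (H.induce C'ᶜ).Reachable a b →
      (H.induce Cᶜ).Reachable (g a) (g b) := by
    intro a b hab hreach
    by_cases ha : (a : V) = v
    · have hbv : (b : V) ≠ v := fun hh => hab (Subtype.ext (ha.trans hh.symm))
      have := key1 b hbv a ha hreach
      simpa only [g, dif_pos ha, dif_neg hbv] using this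
    · by_cases hb : (b : V) = v
      · have := (key1 a ha b hb hreach.symm).symm
        simpa only [g, dif_pos hb, dif_neg ha] using this
      · obtain ⟨w⟩ := hreach
        obtain ⟨w', hw'⟩ := walk_of_induce w
        obtain ⟨p', hp'⟩ := reroute hsimp C'ᶜ w'.length w' rfl ha hb hw'
        have hs : ∀ z ∈ p'.support, z ∈ Cᶜ := fun z hz => hsub ⟨(hp' z hz).1, (hp' z hz).2⟩
        have := reach_induce_of_walk p' hs
        simpa only [g, dif_neg ha, dif_neg hb] using this
  -- now the counting
  unfold removedPairs
  apply Nat.sub_le_sub_left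
  unfold connPairs
  refine Set.ncard_le_ncard_of_injOn (fun p => (g p.1, g p.2)) ?_ ?_ (Set.toFinite _)
  · rintro ⟨a, b⟩ ⟨hab, hreach⟩
    exact ⟨fun h => hab (ginj h), key2 a b hab hreach⟩
  · intro p _ q _ hpq
    have h1 := congrArg Prod.fst hpq
    have h2 := congrArg Prod.snd hpq
    exact Prod.ext (ginj h1) (ginj h2)
end
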